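/- Under the slow cooling regime (R1) with $T_k\sim \beta B k^{\beta-1}$, $B>0$, $\beta>1$, define $\chi_n(\tau)=(\sigma_\mu^2\sigma_V)^2((\beta-1)/\beta)^4 (n/B)^{1/\beta}(\log n)^4$. If $\mathrm{Var}(Y_j)\sim (\sigma_\mu^2\sigma_V)^2 (\log T_j)^4$ as $j\to\infty$, then for fixed $0<t<s\le 1$, $\sum_{j=k(\lfloor tn\rfloor)+2}^{k(\lfloor sn\rfloor)}\mathrm{Var}(Y_j) \sim \chi_n(\tau)\,(s^{1/\beta}-t^{1/\beta})$ as $n\to\infty$. -/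

import Mathlib

open Filter

lemma aux_ratio_tendsto_one {u v : ℕ → ℝ}
    (hv : ∀ᶠ n in atTop, 0 < v n)
    (h : ∀ ε : ℝ, 0 < ε → ∀ᶠ n in atTop, |u n - v n| ≤ ε * v n) :
    Tendsto (fun n => u n / v n) atTop (nhds 1) := by
  rw [Metric.tendsto_nhds]
  intro ε hε
  filter_upwards [hv, h (ε / 2) (by positivity)] with n hv' hu'
  rw [Real.dist_eq]
  have h1 : u n / v n - 1 = (u n - v n) / v n := by field_simp
  rw [h1, abs_div, abs_of_pos hv']
  calc |u n - v n| / v n ≤ ε / 2 * v n / v n := by gcongr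
    _ = ε / 2 := by field_simp
    _ < ε := by linarith

lemma aux_log_asymp {w : ℕ → ℝ} {C p : ℝ} (hC : 0 < C)
    (hw : Tendsto (fun j : ℕ => w j / (C * (j : ℝ) ^ p)) atTop (nhds 1)) :
    Tendsto (fun j : ℕ => Real.log (w j) - (Real.log C + p * Real.log j)) atTop (nhds 0) := by
  have hd : ∀ᶠ j : ℕ in atTop, 0 < C * (j : ℝ) ^ p := by
    filter_upwards [eventually_ge_atTop 1] with j hj
    have : (0:ℝ) < (j:ℝ) := by exact_mod_cast hj
    positivity
  have hwpos : ∀ᶠ j : ℕ in atTop, 0 < w j := by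
    have := hw.eventually (eventually_gt_nhds (by norm_num : (1:ℝ)/2 < 1))
    filter_upwards [this, hd] with j h1 h2
    have := div_pos_iff.mp (lt_trans (by norm_num) h1)
    rcases this with ⟨h, _⟩ | ⟨_, h⟩
    · exact h
    · linarith
  have hlog : Tendsto (fun j : ℕ => Real.log (w j / (C * (j : ℝ) ^ p))) atTop (nhds 0) := by
    have := (Real.continuousAt_log (by norm_num : (1:ℝ) ≠ 0)).tendsto.comp hw
    simpa [Function.comp_def] using this
  refine hlog.congr' ?_
  filter_upwards [hwpos, hd, eventually_ge_atTop 1] with j h1 h2 h3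
  have hj : (0:ℝ) < (j:ℝ) := by exact_mod_cast h3
  rw [Real.log_div h1.ne' h2.ne', Real.log_mul hC.ne' (by positivity), Real.log_rpow hj]

lemma aux_floor_div (x : ℝ) (hx : 0 < x) :
    Tendsto (fun n : ℕ => (⌊x * (n : ℝ)⌋₊ : ℝ) / n) atTop (nhds x) := by
  have hlow : Tendsto (fun n : ℕ => x - 1 / (n : ℝ)) atTop (nhds x) := by
    simpa using tendsto_const_nhds.sub (tendsto_one_div_atTop_nhds_zero_nat (𝕜 := ℝ))
  refine tendsto_of_tendsto_of_tendsto_of_le_of_le' hlow tendsto_const_nhds ?_ ?_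
  · filter_upwards [eventually_ge_atTop 1] with n hn
    have hn' : (0:ℝ) < (n:ℝ) := by exact_mod_cast hn
    rw [sub_le_iff_le_add, ← add_div, le_div_iff₀ hn']
    have := Nat.sub_one_lt_floor (x * (n:ℝ))
    linarith
  · filter_upwards [eventually_ge_atTop 1] with n hn
    have hn' : (0:ℝ) < (n:ℝ) := by exact_mod_cast hn
    rw [div_le_iff₀ hn']
    exact Nat.floor_le (by positivity)

/-- Slow cooling variance sum asymptotics: if `Var(Y_j) ~ σ (log T_j)^4` with
`σ = (σ_μ² σ_V)²` and `T_j ~ β B j^(β-1)`, `k(n) ~ (n/B)^(1/β)`, then for `0 < t < s ≤ 1`,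
`∑_{j=k(⌊tn⌋)+2}^{k(⌊sn⌋)} Var(Y_j) ~ χ_n(τ) (s^(1/β) - t^(1/β))` where
`χ_n(τ) = σ ((β-1)/β)^4 (n/B)^(1/β) (log n)^4`. -/
theorem slow_cooling_variance_sum_asymptotics
    (B β σ : ℝ) (hB : 0 < B) (hβ : 1 < β) (hσ : 0 < σ)
    (T : ℕ → ℕ)
    (hT : Tendsto (fun j : ℕ => ((T j : ℝ)) / (β * B * (j : ℝ) ^ (β - 1))) atTop (nhds 1))
    (k : ℕ → ℕ)
    (hk : Tendsto (fun n : ℕ => ((k n : ℝ)) / (((n : ℝ) / B) ^ (1 / β))) atTop (nhds 1))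
    (V : ℕ → ℝ)
    (hV : Tendsto (fun j : ℕ => V j / (σ * (Real.log (T j : ℝ)) ^ 4)) atTop (nhds 1))
    (χ : ℕ → ℝ)
    (hχ : ∀ n : ℕ, χ n = σ * ((β - 1) / β) ^ 4 * ((n : ℝ) / B) ^ (1 / β) * (Real.log n) ^ 4)
    (t s : ℝ) (ht : 0 < t) (hts : t < s) (hs : s ≤ 1) :
    Tendsto
      (fun n : ℕ =>
        (∑ j ∈ Finset.Icc (k ⌊t * (n : ℝ)⌋₊ + 2) (k ⌊s * (n : ℝ)⌋₊), V j) /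
          (χ n * (s ^ (1 / β) - t ^ (1 / β))))
      atTop (nhds 1) := by
  have hβ0 : (0:ℝ) < β := by linarith
  have hβ1 : (0:ℝ) < β - 1 := by linarith
  have hβinv : (0:ℝ) < 1 / β := by positivity
  set c : ℝ := s ^ (1 / β) - t ^ (1 / β) with hc_def
  have hc : 0 < c := sub_pos.2 (Real.rpow_lt_rpow ht.le hts hβinv)
  set r : ℕ → ℝ := fun n => ((n : ℝ) / B) ^ (1 / β) with hr_def
  have hr_pos : ∀ᶠ n : ℕ in atTop, 0 < r n := by
    filter_upwards [eventually_ge_atTop 1] with n hn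
    have : (0:ℝ) < (n:ℝ) := by exact_mod_cast hn
    exact Real.rpow_pos_of_pos (by positivity) _
  have hr_top : Tendsto r atTop atTop :=
    (tendsto_rpow_atTop hβinv).comp (tendsto_natCast_atTop_atTop.atTop_div_const hB)
  set a : ℕ → ℕ := fun n => k ⌊t * (n : ℝ)⌋₊ + 2 with ha_def
  set b : ℕ → ℕ := fun n => k ⌊s * (n : ℝ)⌋₊ with hb_def
  -- limits of a/r and b/r
  have hkx : ∀ x : ℝ, 0 < x →
      Tendsto (fun n : ℕ => (k ⌊x * (n : ℝ)⌋₊ : ℝ) / r n) atTop (nhds (x ^ (1 / β))) := by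
    intro x hx
    have hmul : Tendsto (fun n : ℕ => x * (n : ℝ)) atTop atTop :=
      tendsto_natCast_atTop_atTop.const_mul_atTop hx
    have hfl : Tendsto (fun n : ℕ => ⌊x * (n : ℝ)⌋₊) atTop atTop :=
      tendsto_nat_floor_atTop.comp hmul
    have h1 : Tendsto (fun n : ℕ =>
        (k ⌊x * (n : ℝ)⌋₊ : ℝ) / (((⌊x * (n : ℝ)⌋₊ : ℕ) : ℝ) / B) ^ (1 / β)) atTop (nhds 1) :=
      hk.comp hfl
    have h2 : Tendsto (fun n : ℕ => ((⌊x * (n : ℝ)⌋₊ : ℝ) / n) ^ (1 / β)) atTop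
        (nhds (x ^ (1 / β))) :=
      ((Real.continuousAt_rpow_const x (1 / β) (Or.inl hx.ne')).tendsto).comp
        (aux_floor_div x hx)
    have h3 := h1.mul h2
    rw [one_mul] at h3
    refine h3.congr' ?_
    filter_upwards [eventually_ge_atTop 1, hfl.eventually (eventually_ge_atTop 1)]
      with n hn hm
    have hn' : (0:ℝ) < (n:ℝ) := by exact_mod_cast hn
    have hm' : (0:ℝ) < ((⌊x * (n : ℝ)⌋₊ : ℕ) : ℝ) := by exact_mod_cast hm
    have hd : (0:ℝ) < (((⌊x * (n : ℝ)⌋₊ : ℕ) : ℝ) / B) ^ (1 / β) :=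
      Real.rpow_pos_of_pos (by positivity) _
    have e1 : ((⌊x * (n : ℝ)⌋₊ : ℝ) / n) ^ (1 / β)
        = (((⌊x * (n : ℝ)⌋₊ : ℕ) : ℝ) / B) ^ (1 / β) / r n := by
      rw [hr_def]
      rw [← Real.div_rpow (by positivity) (by positivity)]
      congr 1
      field_simp
    rw [e1]
    rw [div_mul_div_cancel₀]
    exact hd.ne'
  have hbr : Tendsto (fun n : ℕ => (b n : ℝ) / r n) atTop (nhds (s ^ (1 / β))) :=
    hkx s (ht.trans hts)
  have har : Tendsto (fun n : ℕ => (a n : ℝ) / r n) atTop (nhds (t ^ (1 / β))) := by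
    have h2 : Tendsto (fun n : ℕ => (2 : ℝ) / r n) atTop (nhds 0) :=
      tendsto_const_nhds.div_atTop hr_top
    have := (hkx t ht).add h2
    rw [add_zero] at this
    refine this.congr (fun n => ?_)
    push_cast [ha_def]
    rw [← add_div]
  have htpos : (0:ℝ) < t ^ (1 / β) := Real.rpow_pos_of_pos ht _
  have hspos : (0:ℝ) < s ^ (1 / β) := Real.rpow_pos_of_pos (ht.trans hts) _
  -- a tends to infinity
  have haR : Tendsto (fun n : ℕ => (a n : ℝ)) atTop atTop := by
    have := har.pos_mul_atTop htpos hr_top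
    refine this.congr' ?_
    filter_upwards [hr_pos] with n hn
    field_simp
  have haT : Tendsto a atTop atTop := tendsto_natCast_atTop_iff.mp haR
  -- eventually a ≤ b
  have hdiff : Tendsto (fun n : ℕ => (b n : ℝ) / r n - (a n : ℝ) / r n) atTop (nhds c) :=
    hbr.sub har
  have hab : ∀ᶠ n : ℕ in atTop, a n ≤ b n := by
    filter_upwards [hdiff.eventually (eventually_gt_nhds hc |>.mono fun x h => h),
      hr_pos] with n h1 h2
    have : (a n : ℝ) / r n < (b n : ℝ) / r n := by linarith
    have := (div_lt_div_iff_of_pos_right h2).mp this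
    exact_mod_cast this.le
  -- cardinality of the interval
  have hcard : ∀ᶠ n : ℕ in atTop,
      ((Finset.Icc (a n) (b n)).card : ℝ) = (b n : ℝ) - (a n : ℝ) + 1 := by
    filter_upwards [hab] with n h
    have h2 : a n ≤ b n + 1 := by omega
    rw [Nat.card_Icc, Nat.cast_sub h2]
    push_cast
    ring
  have hcardr : Tendsto (fun n : ℕ => ((Finset.Icc (a n) (b n)).card : ℝ) / r n) atTop
      (nhds c) := by
    have h1 : Tendsto (fun n : ℕ => (b n : ℝ) / r n - (a n : ℝ) / r n + 1 / r n) atTop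
        (nhds c) := by
      have := hdiff.add (((tendsto_const_nhds : Tendsto (fun _ : ℕ => (1:ℝ)) atTop (nhds 1)).div_atTop hr_top))
      rwa [add_zero] at this
    refine h1.congr' ?_
    filter_upwards [hcard] with n h
    rw [h]
    ring
  -- logarithm asymptotics
  have hlogn : Tendsto (fun n : ℕ => Real.log n) atTop atTop :=
    Real.tendsto_log_atTop.comp tendsto_natCast_atTop_atTop
  have hlogdiv : ∀ (u : ℕ → ℕ) (L : ℝ), 0 < L →
      Tendsto (fun n : ℕ => (u n : ℝ) / r n) atTop (nhds L) →
      Tendsto (fun n : ℕ => Real.log (u n) / Real.log n) atTop (nhds (1 / β)) := by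
    intro u L hL hu
    have huR : Tendsto (fun n : ℕ => (u n : ℝ)) atTop atTop := by
      have := hu.pos_mul_atTop hL hr_top
      refine this.congr' ?_
      filter_upwards [hr_pos] with n hn
      field_simp
    have hlogq : Tendsto (fun n : ℕ => Real.log ((u n : ℝ) / r n)) atTop (nhds (Real.log L)) :=
      ((Real.continuousAt_log hL.ne').tendsto).comp hu
    have h0 : Tendsto (fun n : ℕ => Real.log ((u n : ℝ) / r n) / Real.log n) atTop (nhds 0) :=
      hlogq.div_atTop hlogn
    have hlogB : Tendsto (fun n : ℕ => (1 / β) * Real.log B / Real.log n) atTop (nhds 0) :=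
      tendsto_const_nhds.div_atTop hlogn
    have hsum : Tendsto (fun n : ℕ =>
        Real.log ((u n : ℝ) / r n) / Real.log n + (1 / β) - (1 / β) * Real.log B / Real.log n)
        atTop (nhds (1 / β)) := by
      have := (h0.add (tendsto_const_nhds : Tendsto (fun _ : ℕ => 1 / β) atTop (nhds (1 / β)))).sub hlogB
      rwa [zero_add, sub_zero] at this
    refine hsum.congr' ?_
    filter_upwards [huR.eventually (eventually_ge_atTop 1), hr_pos,
      eventually_ge_atTop 1, hlogn.eventually (eventually_gt_atTop 0)] with n h1 h2 h3 h4
    have hn' : (0:ℝ) < (n:ℝ) := by exact_mod_cast h3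
    have hu' : (0:ℝ) < (u n : ℝ) := by linarith
    have hlr : Real.log (r n) = (1 / β) * (Real.log n - Real.log B) := by
      rw [hr_def]
      rw [Real.log_rpow (by positivity), Real.log_div hn'.ne' hB.ne']
    rw [Real.log_div hu'.ne' h2.ne', hlr]
    field_simp
    ring
  have hla : Tendsto (fun n : ℕ => Real.log (a n) / Real.log n) atTop (nhds (1 / β)) :=
    hlogdiv a _ htpos har
  have hlb : Tendsto (fun n : ℕ => Real.log (b n) / Real.log n) atTop (nhds (1 / β)) :=
    hlogdiv b _ hspos hbr
  -- the comparison sum and normalizer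
  set Ssum : ℕ → ℝ := fun n => ∑ j ∈ Finset.Icc (a n) (b n), (Real.log (j : ℝ)) ^ 4 with hSsum_def
  set E : ℕ → ℝ := fun n => c * r n * (Real.log n / β) ^ 4 with hE_def
  have ha2 : ∀ n, 2 ≤ a n := fun n => by simp [ha_def]
  have hS_low : ∀ n, ((Finset.Icc (a n) (b n)).card : ℝ) * Real.log (a n : ℝ) ^ 4 ≤ Ssum n := by
    intro n
    rw [← nsmul_eq_mul]
    refine Finset.card_nsmul_le_sum _ _ _ ?_
    intro j hj
    obtain ⟨h1, _⟩ := Finset.mem_Icc.mp hj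
    have hapos : (0:ℝ) < (a n : ℝ) := by
      have := ha2 n; exact_mod_cast Nat.lt_of_lt_of_le (by norm_num) this
    have hl : Real.log (a n : ℝ) ≤ Real.log (j : ℝ) :=
      Real.log_le_log hapos (by exact_mod_cast h1)
    have hnn : (0:ℝ) ≤ Real.log (a n : ℝ) := Real.log_nonneg (by
      have := ha2 n; exact_mod_cast Nat.one_le_iff_ne_zero.mpr (by omega))
    exact pow_le_pow_left₀ hnn hl 4
  have hS_up : ∀ n, Ssum n ≤ ((Finset.Icc (a n) (b n)).card : ℝ) * Real.log (b n : ℝ) ^ 4 := by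
    intro n
    rw [← nsmul_eq_mul]
    refine Finset.sum_le_card_nsmul _ _ _ ?_
    intro j hj
    obtain ⟨h1, h2⟩ := Finset.mem_Icc.mp hj
    have hjpos : (0:ℝ) < (j : ℝ) := by
      have := (ha2 n).trans h1; exact_mod_cast Nat.lt_of_lt_of_le (by norm_num) this
    have hl : Real.log (j : ℝ) ≤ Real.log (b n : ℝ) :=
      Real.log_le_log hjpos (by exact_mod_cast h2)
    have hnn : (0:ℝ) ≤ Real.log (j : ℝ) := Real.log_nonneg (by
      have := (ha2 n).trans h1; exact_mod_cast Nat.one_le_iff_ne_zero.mpr (by omega))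
    exact pow_le_pow_left₀ hnn hl 4
  -- ratio of endpoint bounds to E tends to 1
  have hratio : ∀ u : ℕ → ℕ,
      Tendsto (fun n : ℕ => Real.log (u n : ℝ) / Real.log n) atTop (nhds (1 / β)) →
      Tendsto (fun n : ℕ =>
        (((Finset.Icc (a n) (b n)).card : ℝ) * Real.log (u n : ℝ) ^ 4) / E n) atTop (nhds 1) := by
    intro u hu
    have hP : Tendsto (fun n : ℕ => ((Finset.Icc (a n) (b n)).card : ℝ) / r n / c) atTop
        (nhds 1) := by
      have := hcardr.div_const c
      rwa [div_self hc.ne'] at this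
    have hQ : Tendsto (fun n : ℕ => (β * (Real.log (u n : ℝ) / Real.log n)) ^ 4) atTop
        (nhds 1) := by
      have h1 : Tendsto (fun n : ℕ => β * (Real.log (u n : ℝ) / Real.log n)) atTop
          (nhds (β * (1 / β))) := tendsto_const_nhds.mul hu
      rw [mul_one_div, div_self hβ0.ne'] at h1
      simpa using h1.pow 4
    have h3 := hP.mul hQ
    rw [one_mul] at h3
    refine h3.congr' ?_
    filter_upwards [hr_pos, hlogn.eventually (eventually_gt_atTop 0)] with n h1 h2
    rw [hE_def]
    field_simp
  have hlowE := hratio a hla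
  have hupE := hratio b hlb
  have hE_pos : ∀ᶠ n : ℕ in atTop, 0 < E n := by
    filter_upwards [hr_pos, hlogn.eventually (eventually_gt_atTop 0)] with n h1 h2
    rw [hE_def]
    positivity
  have hSE : Tendsto (fun n : ℕ => Ssum n / E n) atTop (nhds 1) := by
    refine tendsto_of_tendsto_of_tendsto_of_le_of_le' hlowE hupE ?_ ?_
    · filter_upwards [hE_pos] with n hn
      gcongr
      exact hS_low n
    · filter_upwards [hE_pos] with n hn
      gcongr
      exact hS_up n
  -- asymptotics of V relative to g j = σ (β-1)^4 (log j)^4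
  have hT' : Tendsto (fun j : ℕ =>
      Real.log (T j : ℝ) - (Real.log (β * B) + (β - 1) * Real.log j)) atTop (nhds 0) :=
    aux_log_asymp (by positivity) hT
  have hden : Tendsto (fun j : ℕ => (β - 1) * Real.log j) atTop atTop :=
    hlogn.const_mul_atTop hβ1
  have hX : Tendsto (fun j : ℕ => Real.log (β * B) + (β - 1) * Real.log j) atTop atTop :=
    tendsto_atTop_add_const_left _ _ hden
  have hlogT_top : Tendsto (fun j : ℕ => Real.log (T j : ℝ)) atTop atTop := by
    have h1 := hT'.add_atTop hX
    refine h1.congr fun j => ?_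
    ring
  have hratioT : Tendsto (fun j : ℕ => Real.log (T j : ℝ) / ((β - 1) * Real.log j)) atTop
      (nhds 1) := by
    have h1 : Tendsto (fun j : ℕ =>
        (Real.log (T j : ℝ) - (Real.log (β * B) + (β - 1) * Real.log j)) /
          ((β - 1) * Real.log j)) atTop (nhds 0) := hT'.div_atTop hden
    have h2 : Tendsto (fun j : ℕ => Real.log (β * B) / ((β - 1) * Real.log j)) atTop (nhds 0) :=
      tendsto_const_nhds.div_atTop hden
    have h3 := (h1.add h2).add
      (tendsto_const_nhds : Tendsto (fun _ : ℕ => (1:ℝ)) atTop (nhds 1))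
    rw [zero_add, zero_add] at h3
    refine h3.congr' ?_
    filter_upwards [hlogn.eventually (eventually_gt_atTop 0)] with j hj
    have hne : (β - 1) * Real.log j ≠ 0 := by positivity
    field_simp
    ring
  have hVg : Tendsto (fun j : ℕ => V j / (σ * (β - 1) ^ 4 * Real.log (j : ℝ) ^ 4)) atTop
      (nhds 1) := by
    have h4 := hratioT.pow 4
    have h5 := hV.mul h4
    rw [one_mul, one_pow] at h5
    refine h5.congr' ?_
    filter_upwards [hlogT_top.eventually (eventually_gt_atTop 0),
      hlogn.eventually (eventually_gt_atTop 0)] with j h1 h2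
    rw [div_pow, mul_pow]
    field_simp
  -- comparison of ∑ V with ∑ g
  set Sg : ℕ → ℝ := fun n => ∑ j ∈ Finset.Icc (a n) (b n),
    σ * (β - 1) ^ 4 * Real.log (j : ℝ) ^ 4 with hSg_def
  have hSgSsum : ∀ n, Sg n = σ * (β - 1) ^ 4 * Ssum n := fun n => by
    simp only [hSg_def, hSsum_def]
    rw [Finset.mul_sum]
  have hSg_pos : ∀ᶠ n : ℕ in atTop, 0 < Sg n := by
    filter_upwards [hab] with n hn
    refine Finset.sum_pos (fun j hj => ?_) ⟨a n, Finset.mem_Icc.mpr ⟨le_refl _, hn⟩⟩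
    obtain ⟨h1, _⟩ := Finset.mem_Icc.mp hj
    have hj2 : (2:ℕ) ≤ j := (ha2 n).trans h1
    have : (1:ℝ) < (j:ℝ) := by exact_mod_cast hj2.trans_lt' (by norm_num)
    have := Real.log_pos this
    positivity
  have hclose : ∀ ε : ℝ, 0 < ε → ∀ᶠ n : ℕ in atTop,
      |(∑ j ∈ Finset.Icc (a n) (b n), V j) - Sg n| ≤ ε * Sg n := by
    intro ε hε
    have hterm : ∀ᶠ j : ℕ in atTop,
        |V j - σ * (β - 1) ^ 4 * Real.log (j : ℝ) ^ 4| ≤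
          ε * (σ * (β - 1) ^ 4 * Real.log (j : ℝ) ^ 4) := by
      have h1 := Metric.tendsto_nhds.mp hVg ε hε
      filter_upwards [h1, eventually_ge_atTop 2] with j hj hj2
      set g : ℝ := σ * (β - 1) ^ 4 * Real.log (j : ℝ) ^ 4 with hg_def
      have hgpos : 0 < g := by
        have : (1:ℝ) < (j:ℝ) := by exact_mod_cast hj2.trans_lt' (by norm_num)
        have := Real.log_pos this
        rw [hg_def]; positivity
      rw [Real.dist_eq] at hj
      have he : V j - g = (V j / g - 1) * g := by field_simp
      calc |V j - g| = |V j / g - 1| * g := by rw [he, abs_mul, abs_of_pos hgpos]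
        _ ≤ ε * g := mul_le_mul_of_nonneg_right hj.le hgpos.le
    obtain ⟨N, hN⟩ := eventually_atTop.mp hterm
    filter_upwards [haT.eventually (eventually_ge_atTop N)] with n hn
    calc |(∑ j ∈ Finset.Icc (a n) (b n), V j) - Sg n|
        = |∑ j ∈ Finset.Icc (a n) (b n),
            (V j - σ * (β - 1) ^ 4 * Real.log (j : ℝ) ^ 4)| := by
          simp only [hSg_def]
          rw [Finset.sum_sub_distrib]
      _ ≤ ∑ j ∈ Finset.Icc (a n) (b n),
            |V j - σ * (β - 1) ^ 4 * Real.log (j : ℝ) ^ 4| :=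
          Finset.abs_sum_le_sum_abs _ _
      _ ≤ ∑ j ∈ Finset.Icc (a n) (b n),
            ε * (σ * (β - 1) ^ 4 * Real.log (j : ℝ) ^ 4) := by
          refine Finset.sum_le_sum fun j hj => ?_
          exact hN j (hn.trans (Finset.mem_Icc.mp hj).1)
      _ = ε * Sg n := by simp only [hSg_def]; rw [Finset.mul_sum]
  have hSfSg : Tendsto (fun n : ℕ =>
      (∑ j ∈ Finset.Icc (a n) (b n), V j) / Sg n) atTop (nhds 1) :=
    aux_ratio_tendsto_one hSg_pos hclose
  -- Sg / (χ n * c) tends to 1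
  have hSgD : Tendsto (fun n : ℕ => Sg n / (χ n * c)) atTop (nhds 1) := by
    refine hSE.congr' ?_
    filter_upwards [] with n
    have hD : χ n * c = σ * (β - 1) ^ 4 * E n := by
      rw [hχ n, hE_def, hr_def]
      ring
    rw [hSgSsum n, hD, mul_div_mul_left _ _ (by positivity)]
  -- conclude
  have hfinal : Tendsto (fun n : ℕ =>
      (∑ j ∈ Finset.Icc (a n) (b n), V j) / (χ n * c)) atTop (nhds 1) := by
    have h6 := hSfSg.mul hSgD
    rw [one_mul] at h6
    refine h6.congr' ?_
    filter_upwards [hSg_pos] with n hn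
    rw [div_mul_div_cancel₀]
    exact hn.ne'
  exact hfinal
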